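/- Fix −3/2 < s < 1/2 and set ω(β) := ⟨β⟩^s |β|^{1/2} for β ∈ ℝ. Then ω is a Muckenhoupt A₂ weight: there exists a constant C > 0 such that for every bounded interval I = [a,b] ⊂ ℝ with a < b, ( (1/(b−a)) ∫_a^b ω(β) dβ ) · ( (1/(b−a)) ∫_a^b ω(β)^{−1} dβ ) ≤ C. -/

import Mathlib

open MeasureTheory Set
open scoped ENNReal

/-- Japanese bracket `⟨x⟩ = (1 + x²)^{1/2}`. -/
noncomputable def jap (x : ℝ) : ℝ := Real.sqrt (1 + x ^ 2)

lemma jap_one_le (x : ℝ) : 1 ≤ jap x := by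
  have h := Real.sqrt_le_sqrt (show (1:ℝ) ≤ 1 + x ^ 2 by nlinarith)
  rwa [Real.sqrt_one] at h

lemma jap_pos (x : ℝ) : 0 < jap x := lt_of_lt_of_le one_pos (jap_one_le x)

lemma abs_le_jap (x : ℝ) : |x| ≤ jap x := by
  rw [jap, ← Real.sqrt_sq_eq_abs]
  exact Real.sqrt_le_sqrt (by nlinarith)

lemma jap_neg (x : ℝ) : jap (-x) = jap x := by simp [jap]

lemma jap_mono {x y : ℝ} (h : |x| ≤ |y|) : jap x ≤ jap y := by
  apply Real.sqrt_le_sqrt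
  have := abs_nonneg x
  nlinarith [sq_abs x, sq_abs y]

lemma jap_le_sqrt2_mul {M : ℝ} (hM : 1 ≤ M) : jap M ≤ Real.sqrt 2 * M := by
  rw [jap, show Real.sqrt 2 * M = Real.sqrt (2 * M^2) by
    rw [Real.sqrt_mul (by norm_num), Real.sqrt_sq (by linarith)]]
  exact Real.sqrt_le_sqrt (by nlinarith)

lemma jap_le_sqrt2 {M : ℝ} (hM : |M| ≤ 1) : jap M ≤ Real.sqrt 2 := by
  rw [jap]
  exact Real.sqrt_le_sqrt (by nlinarith [sq_abs M, abs_nonneg M])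

lemma maxpow_le {t : ℝ} (ht : -(3/2) ≤ t) (ht0 : t ≤ 0) {M : ℝ} (hM : 0 < M) :
    max 1 M ^ t ≤ 2 ^ ((3:ℝ)/4) * jap M ^ t := by
  have hj : jap M ≤ Real.sqrt 2 * max 1 M := by
    rcases le_total M 1 with h | h
    · have := jap_le_sqrt2 (by rw [abs_of_pos hM]; exact h)
      calc jap M ≤ Real.sqrt 2 := this
        _ = Real.sqrt 2 * 1 := by ring
        _ ≤ Real.sqrt 2 * max 1 M :=
            mul_le_mul_of_nonneg_left (le_max_left 1 M) (Real.sqrt_nonneg 2)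
    · calc jap M ≤ Real.sqrt 2 * M := jap_le_sqrt2_mul h
        _ ≤ Real.sqrt 2 * max 1 M :=
            mul_le_mul_of_nonneg_left (le_max_right 1 M) (Real.sqrt_nonneg 2)
  have h1 : (Real.sqrt 2 * max 1 M) ^ t ≤ jap M ^ t :=
    Real.rpow_le_rpow_of_nonpos (jap_pos M) hj ht0
  have h2 : (Real.sqrt 2 * max 1 M) ^ t = Real.sqrt 2 ^ t * max 1 M ^ t :=
    Real.mul_rpow (Real.sqrt_nonneg 2) (le_trans zero_le_one (le_max_left 1 M))
  have h3 : (2:ℝ) ^ (-(3/4):ℝ) ≤ Real.sqrt 2 ^ t := by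
    rw [Real.sqrt_eq_rpow, ← Real.rpow_mul (by norm_num : (0:ℝ) ≤ 2)]
    exact Real.rpow_le_rpow_of_exponent_le (by norm_num) (by linarith)
  have h4 : (2:ℝ) ^ ((3:ℝ)/4) * 2 ^ (-(3/4):ℝ) = 1 := by
    rw [← Real.rpow_add (by norm_num : (0:ℝ) < 2)]; norm_num
  have h5 : (0:ℝ) < max 1 M ^ t := Real.rpow_pos_of_pos (lt_of_lt_of_le one_pos (le_max_left 1 M)) t
  have h6 : (0:ℝ) < (2:ℝ) ^ ((3:ℝ)/4) := Real.rpow_pos_of_pos (by norm_num) _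
  nlinarith [mul_le_mul_of_nonneg_left h1 (le_of_lt h6),
    mul_le_mul_of_nonneg_right h3 (le_of_lt h5)]
-- reflection
lemma lint_reflect (f : ℝ → ENNReal) (M : ℝ) :
    ∫⁻ x in Set.Ioc (-M) 0, f x = ∫⁻ x in Set.Ico 0 M, f (-x) := by
  have hemb : MeasurableEmbedding (Neg.neg : ℝ → ℝ) :=
    (Homeomorph.neg ℝ).measurableEmbedding
  calc ∫⁻ x in Set.Ioc (-M) 0, f x
      = ∫⁻ x in Set.Ioc (-M) 0, f x ∂(Measure.map Neg.neg volume) := by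
        rw [Measure.map_neg_eq_self]
    _ = ∫⁻ x, f x ∂(Measure.map Neg.neg (volume.restrict (Neg.neg ⁻¹' Set.Ioc (-M) 0))) := by
        rw [← Measure.restrict_map measurable_neg measurableSet_Ioc]
    _ = ∫⁻ x in Neg.neg ⁻¹' Set.Ioc (-M) 0, f (-x) := hemb.lintegral_map f
    _ = ∫⁻ x in Set.Ico 0 M, f (-x) := by
        congr 1
        have : Neg.neg ⁻¹' Set.Ioc (-M) 0 = Set.Ico 0 M := by
          ext y
          simp only [Set.mem_preimage, Set.mem_Ioc, Set.mem_Ico]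
          constructor <;> intro h <;> constructor <;> linarith [h.1, h.2]
        rw [this]

lemma even_reduce (f : ℝ → ENNReal) (hf : ∀ x, f (-x) = f x) {M : ℝ} (hM : 0 < M) :
    ∫⁻ x in Set.Ioc (-M) M, f x ≤ 2 * ∫⁻ x in Set.Ioc 0 M, f x := by
  have hsub : Set.Ioc (-M) M ⊆ Set.Ioc (-M) 0 ∪ Set.Ioc 0 M := by
    rw [Set.Ioc_union_Ioc_eq_Ioc (by linarith) (by linarith)]
  calc ∫⁻ x in Set.Ioc (-M) M, f x
      ≤ ∫⁻ x in Set.Ioc (-M) 0 ∪ Set.Ioc 0 M, f x := lintegral_mono_set hsub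
    _ ≤ (∫⁻ x in Set.Ioc (-M) 0, f x) + ∫⁻ x in Set.Ioc 0 M, f x := lintegral_union_le _ _ _
    _ = (∫⁻ x in Set.Ico 0 M, f x) + ∫⁻ x in Set.Ioc 0 M, f x := by
        rw [lint_reflect]; simp only [hf]
    _ = (∫⁻ x in Set.Ioc 0 M, f x) + ∫⁻ x in Set.Ioc 0 M, f x := by
        rw [setLIntegral_congr Ico_ae_eq_Ioc]
    _ = 2 * ∫⁻ x in Set.Ioc 0 M, f x := (two_mul _).symm

lemma key {q : ℝ} (hq : -1 < q) {a b : ℝ} (ha : 0 ≤ a) (hab : a ≤ b) :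
    ∫⁻ x in Set.Ioc a b, ENNReal.ofReal (|x| ^ q)
      ≤ ENNReal.ofReal (b ^ (q + 1) / (q + 1)) := by
  have h1 : ∫⁻ x in Set.Ioc a b, ENNReal.ofReal (|x| ^ q)
      = ∫⁻ x in Set.Ioc a b, ENNReal.ofReal (x ^ q) := by
    apply setLIntegral_congr_fun measurableSet_Ioc
    intro x hx; dsimp only
    rw [abs_of_pos (lt_of_le_of_lt ha hx.1)]
  have hint : IntegrableOn (fun x : ℝ => x ^ q) (Set.Ioc a b) :=
    (intervalIntegrable_iff_integrableOn_Ioc_of_le hab).mp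
      (intervalIntegral.intervalIntegrable_rpow' hq)
  have h2 : ∫⁻ x in Set.Ioc a b, ENNReal.ofReal (x ^ q)
      = ENNReal.ofReal (∫ x in Set.Ioc a b, x ^ q) := by
    rw [ofReal_integral_eq_lintegral_ofReal hint]
    exact ae_restrict_of_forall_mem measurableSet_Ioc
      (fun x hx => Real.rpow_nonneg (le_of_lt (lt_of_le_of_lt ha hx.1)) q)
  have h3 : ∫ x in Set.Ioc a b, x ^ q = (b ^ (q+1) - a ^ (q+1)) / (q+1) := by
    rw [← intervalIntegral.integral_of_le hab]
    exact integral_rpow (Or.inl hq)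
  rw [h1, h2, h3]
  apply ENNReal.ofReal_le_ofReal
  have hq1 : (0:ℝ) < q + 1 := by linarith
  have : (0:ℝ) ≤ a ^ (q+1) := Real.rpow_nonneg ha _
  gcongr
  linarith

lemma gen {t p : ℝ} (ht : -(3/2) ≤ t) (hp : -1 < p) (htp : -1 < t + p) :
    ∃ C > (0:ℝ), ∀ M : ℝ, 0 < M →
      ∫⁻ x in Set.Ioc (-M) M, ENNReal.ofReal (jap x ^ t * |x| ^ p)
        ≤ ENNReal.ofReal (C * (M ^ (p + 1) * jap M ^ t)) := by
  have hp1 : (0:ℝ) < p + 1 := by linarith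
  have htp1 : (0:ℝ) < t + p + 1 := by linarith
  set c : ℝ := 2 ^ ((3:ℝ)/4) with hc_def
  have hc : (0:ℝ) < c := Real.rpow_pos_of_pos (by norm_num) _
  refine ⟨c * (2/(p+1) + 2/(t+p+1)) + 2/(p+1), by positivity, fun M hM => ?_⟩
  set C : ℝ := c * (2/(p+1) + 2/(t+p+1)) + 2/(p+1) with hC_def
  have hjMt : (0:ℝ) < jap M ^ t := Real.rpow_pos_of_pos (jap_pos M) t
  have hMp1 : (0:ℝ) < M ^ (p+1) := Real.rpow_pos_of_pos hM _
  set f : ℝ → ENNReal := fun x => ENNReal.ofReal (jap x ^ t * |x| ^ p) with hf_def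
  have hfe : ∀ x, f (-x) = f x := fun x => by simp [hf_def, jap_neg]
  have hred : ∫⁻ x in Set.Ioc (-M) M, f x ≤ 2 * ∫⁻ x in Set.Ioc 0 M, f x :=
    even_reduce f hfe hM
  rcases le_or_gt 0 t with ht0 | ht0
  · -- t ≥ 0
    have hpt : ∀ x ∈ Set.Ioc (0:ℝ) M, f x ≤ ENNReal.ofReal (jap M ^ t) * ENNReal.ofReal (|x| ^ p) := by
      intro x hx
      rw [hf_def, ← ENNReal.ofReal_mul (le_of_lt hjMt)]
      apply ENNReal.ofReal_le_ofReal
      apply mul_le_mul_of_nonneg_right ?_ (Real.rpow_nonneg (abs_nonneg x) p)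
      exact Real.rpow_le_rpow (le_of_lt (jap_pos x)) (jap_mono (by
        rw [abs_of_pos hM]
        rw [abs_of_pos hx.1]
        exact hx.2)) ht0
    have h1 : ∫⁻ x in Set.Ioc (0:ℝ) M, f x
        ≤ ENNReal.ofReal (jap M ^ t) * ∫⁻ x in Set.Ioc (0:ℝ) M, ENNReal.ofReal (|x| ^ p) := by
      rw [← lintegral_const_mul _ (by fun_prop)]
      exact setLIntegral_mono (by fun_prop) hpt
    have h2 := key hp (le_refl (0:ℝ)) (le_of_lt hM)
    calc ∫⁻ x in Set.Ioc (-M) M, f x ≤ 2 * ∫⁻ x in Set.Ioc 0 M, f x := hred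
      _ ≤ 2 * (ENNReal.ofReal (jap M ^ t) * ENNReal.ofReal (M ^ (p+1) / (p+1))) := by
          gcongr
          exact le_trans h1 (by gcongr)
      _ = ENNReal.ofReal (2 * (jap M ^ t * (M ^ (p+1) / (p+1)))) := by
          rw [ENNReal.ofReal_mul (by norm_num), ENNReal.ofReal_mul (le_of_lt hjMt),
            ENNReal.ofReal_ofNat]
      _ ≤ ENNReal.ofReal (C * (M ^ (p+1) * jap M ^ t)) := by
          apply ENNReal.ofReal_le_ofReal
          have heq : 2 * (jap M ^ t * (M ^ (p+1) / (p+1))) = (2/(p+1)) * (M ^ (p+1) * jap M ^ t) := by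
            field_simp
          rw [heq]
          apply mul_le_mul_of_nonneg_right ?_ (by positivity)
          rw [hC_def]
          have : (0:ℝ) ≤ c * (2/(p+1) + 2/(t+p+1)) := by positivity
          linarith
  · -- t < 0
    have hj1 : ∀ x : ℝ, jap x ^ t ≤ 1 := fun x =>
      Real.rpow_le_one_of_one_le_of_nonpos (jap_one_le x) (le_of_lt ht0)
    have hptsmall : ∀ x ∈ Set.Ioc (0:ℝ) 1 ∪ Set.Ioc (0:ℝ) M, f x ≤ ENNReal.ofReal (|x| ^ p) := by
      intro x _
      apply ENNReal.ofReal_le_ofReal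
      nlinarith [hj1 x, Real.rpow_nonneg (abs_nonneg x) p]
    rcases le_or_gt M 1 with hM1 | hM1
    · -- M ≤ 1
      have h1 : ∫⁻ x in Set.Ioc (0:ℝ) M, f x ≤ ENNReal.ofReal (M ^ (p+1) / (p+1)) := by
        refine le_trans (setLIntegral_mono (by fun_prop)
          (fun x hx => hptsmall x (Set.mem_union_right _ hx))) ?_
        exact key hp (le_refl (0:ℝ)) (le_of_lt hM)
      have hmx : (1:ℝ) ≤ c * jap M ^ t := by
        have := maxpow_le ht (le_of_lt ht0) hM
        rwa [max_eq_left hM1, Real.one_rpow] at this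
      calc ∫⁻ x in Set.Ioc (-M) M, f x ≤ 2 * ∫⁻ x in Set.Ioc 0 M, f x := hred
        _ ≤ 2 * ENNReal.ofReal (M ^ (p+1) / (p+1)) := by gcongr
        _ = ENNReal.ofReal (2 * (M ^ (p+1) / (p+1))) := by
            rw [ENNReal.ofReal_mul (by norm_num), ENNReal.ofReal_ofNat]
        _ ≤ ENNReal.ofReal (C * (M ^ (p+1) * jap M ^ t)) := by
            apply ENNReal.ofReal_le_ofReal
            have key1 : 2 * (M ^ (p+1) / (p+1)) ≤ (2/(p+1)) * (M ^ (p+1)) * (c * jap M ^ t) := by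
              have h0 : (0:ℝ) ≤ (2/(p+1)) * (M ^ (p+1)) := by positivity
              have e : 2 * (M ^ (p+1) / (p+1)) = (2/(p+1)) * (M ^ (p+1)) * 1 := by ring
              rw [e]
              exact mul_le_mul_of_nonneg_left hmx h0
            have key2 : (2/(p+1)) * (M ^ (p+1)) * (c * jap M ^ t)
                = (c * (2/(p+1))) * (M ^ (p+1) * jap M ^ t) := by ring
            have key3 : c * (2/(p+1)) ≤ C := by
              have h1 : (0:ℝ) ≤ c * (2/(t+p+1)) := by positivity
              have h2 : (0:ℝ) ≤ 2/(p+1) := by positivity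
              have e : C = c * (2/(p+1)) + (c * (2/(t+p+1)) + 2/(p+1)) := by
                rw [hC_def]; ring
              linarith
            nlinarith [mul_le_mul_of_nonneg_right key3 (le_of_lt (mul_pos hMp1 hjMt))]
    · -- M > 1
      have hsplit : Set.Ioc (0:ℝ) M = Set.Ioc (0:ℝ) 1 ∪ Set.Ioc (1:ℝ) M :=
        (Set.Ioc_union_Ioc_eq_Ioc (by norm_num) (le_of_lt hM1)).symm
      have h1 : ∫⁻ x in Set.Ioc (0:ℝ) 1, f x ≤ ENNReal.ofReal (1 / (p+1)) := by
        refine le_trans (setLIntegral_mono (by fun_prop)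
          (fun x hx => hptsmall x (Set.mem_union_left _ hx))) ?_
        have := key hp (le_refl (0:ℝ)) (zero_le_one (α := ℝ))
        rwa [Real.one_rpow] at this
      have h2 : ∫⁻ x in Set.Ioc (1:ℝ) M, f x ≤ ENNReal.ofReal (M ^ (t+p+1) / (t+p+1)) := by
        have hpt2 : ∀ x ∈ Set.Ioc (1:ℝ) M, f x ≤ ENNReal.ofReal (|x| ^ (t+p)) := by
          intro x hx
          apply ENNReal.ofReal_le_ofReal
          have hxpos : (0:ℝ) < |x| := by rw [abs_of_pos (by linarith [hx.1])]; linarith [hx.1]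
          have hja : jap x ^ t ≤ |x| ^ t :=
            Real.rpow_le_rpow_of_nonpos hxpos (abs_le_jap x) (le_of_lt ht0)
          calc jap x ^ t * |x| ^ p ≤ |x| ^ t * |x| ^ p :=
                mul_le_mul_of_nonneg_right hja (Real.rpow_nonneg (abs_nonneg x) p)
            _ = |x| ^ (t+p) := (Real.rpow_add hxpos t p).symm
        refine le_trans (setLIntegral_mono (by fun_prop) hpt2) ?_
        have := key htp (zero_le_one (α := ℝ)) (le_of_lt hM1)
        convert this using 3 <;> ring
      have hK1 : (1:ℝ) ≤ M ^ (t+p+1) := Real.one_le_rpow (le_of_lt hM1) (le_of_lt htp1)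
      have hKsplit : M ^ (t+p+1) = M ^ t * M ^ (p+1) := by
        rw [← Real.rpow_add hM]; ring_nf
      have hMt : M ^ t ≤ c * jap M ^ t := by
        have := maxpow_le ht (le_of_lt ht0) hM
        rwa [max_eq_right (le_of_lt hM1)] at this
      calc ∫⁻ x in Set.Ioc (-M) M, f x ≤ 2 * ∫⁻ x in Set.Ioc 0 M, f x := hred
        _ ≤ 2 * (ENNReal.ofReal (1/(p+1)) + ENNReal.ofReal (M ^ (t+p+1) / (t+p+1))) := by
            gcongr
            rw [hsplit]
            exact le_trans (lintegral_union_le _ _ _) (add_le_add h1 h2)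
        _ = ENNReal.ofReal (2 * (1/(p+1) + M ^ (t+p+1) / (t+p+1))) := by
            rw [ENNReal.ofReal_mul (by norm_num), ENNReal.ofReal_add (by positivity) (by positivity),
              ENNReal.ofReal_ofNat]
        _ ≤ ENNReal.ofReal (C * (M ^ (p+1) * jap M ^ t)) := by
            apply ENNReal.ofReal_le_ofReal
            have hMtpos : (0:ℝ) < M ^ t := Real.rpow_pos_of_pos hM t
            have step1 : 2 * (1/(p+1) + M ^ (t+p+1) / (t+p+1))
                ≤ (2/(p+1) + 2/(t+p+1)) * M ^ (t+p+1) := by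
              have h := mul_nonneg (show (0:ℝ) ≤ 2/(p+1) by positivity)
                (sub_nonneg.mpr hK1)
              have e : (2/(p+1) + 2/(t+p+1)) * M ^ (t+p+1)
                  - 2 * (1/(p+1) + M ^ (t+p+1) / (t+p+1))
                  = (2/(p+1)) * (M ^ (t+p+1) - 1) := by ring
              linarith
            have step2 : (2/(p+1) + 2/(t+p+1)) * M ^ (t+p+1)
                ≤ (2/(p+1) + 2/(t+p+1)) * (c * jap M ^ t * M ^ (p+1)) := by
              rw [hKsplit]
              apply mul_le_mul_of_nonneg_left ?_ (by positivity)
              exact mul_le_mul_of_nonneg_right hMt (le_of_lt hMp1)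
            have step3 : (2/(p+1) + 2/(t+p+1)) * (c * jap M ^ t * M ^ (p+1))
                = (c * (2/(p+1) + 2/(t+p+1))) * (M ^ (p+1) * jap M ^ t) := by ring
            have step4 : (c * (2/(p+1) + 2/(t+p+1))) * (M ^ (p+1) * jap M ^ t)
                ≤ C * (M ^ (p+1) * jap M ^ t) := by
              apply mul_le_mul_of_nonneg_right ?_ (by positivity)
              rw [hC_def]
              have : (0:ℝ) ≤ 2/(p+1) := by positivity
              linarith
            linarith

lemma rpow_ratio {u v e : ℝ} (he : |e| ≤ 3/2) (hu : 0 < u) (hv : 0 < v)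
    (huv : u ≤ 2*v) (hvu : v ≤ 2*u) : u ^ e ≤ 2 ^ ((3:ℝ)/2) * v ^ e := by
  obtain ⟨he1, he2⟩ := abs_le.mp he
  rcases le_or_gt 0 e with h | h
  · calc u ^ e ≤ (2*v) ^ e := Real.rpow_le_rpow (le_of_lt hu) huv h
      _ = 2 ^ e * v ^ e := Real.mul_rpow (by norm_num) (le_of_lt hv)
      _ ≤ 2 ^ ((3:ℝ)/2) * v ^ e := mul_le_mul_of_nonneg_right
          (Real.rpow_le_rpow_of_exponent_le one_le_two he2)
          (Real.rpow_nonneg (le_of_lt hv) e)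
  · have h1 : v/2 ≤ u := by linarith
    have h2 : u ^ e ≤ (v/2) ^ e :=
      Real.rpow_le_rpow_of_nonpos (by positivity) h1 (le_of_lt h)
    have h3 : (v/2) ^ e = (2 ^ e)⁻¹ * v ^ e := by
      rw [Real.div_rpow (le_of_lt hv) (by norm_num : (0:ℝ) ≤ 2)]
      rw [div_eq_inv_mul]
    have h4 : (2:ℝ) ^ (-(3/2):ℝ) ≤ 2 ^ e :=
      Real.rpow_le_rpow_of_exponent_le one_le_two (by linarith)
    have h5 : ((2:ℝ) ^ e)⁻¹ ≤ 2 ^ ((3:ℝ)/2) := by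
      rw [show ((2:ℝ) ^ ((3:ℝ)/2)) = ((2:ℝ) ^ (-(3/2):ℝ))⁻¹ by
        rw [← Real.rpow_neg (by norm_num : (0:ℝ) ≤ 2)]; norm_num]
      exact inv_anti₀ (Real.rpow_pos_of_pos (by norm_num) _) h4
    calc u ^ e ≤ (2 ^ e)⁻¹ * v ^ e := by rw [← h3]; exact h2
      _ ≤ 2 ^ ((3:ℝ)/2) * v ^ e :=
          mul_le_mul_of_nonneg_right h5 (Real.rpow_nonneg (le_of_lt hv) e)

lemma jap_le_two_mul {x y : ℝ} (h : |x| ≤ 2*|y|) : jap x ≤ 2 * jap y := by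
  have h1 : jap x ≤ jap (2*y) := jap_mono (by rw [abs_mul]; simpa using h)
  refine le_trans h1 ?_
  rw [jap, jap, show (2:ℝ) * Real.sqrt (1 + y^2) = Real.sqrt (4*(1 + y^2)) by
    rw [Real.sqrt_mul (by norm_num), show Real.sqrt 4 = 2 by
      rw [show (4:ℝ) = 2^2 by norm_num, Real.sqrt_sq (by norm_num)]]]
  exact Real.sqrt_le_sqrt (by nlinarith)

lemma far_ratio {t p x y : ℝ} (ht : |t| ≤ 3/2) (hp : |p| ≤ 3/2) (hy : 0 < |y|)
    (hxy : |x| ≤ 2*|y|) (hyx : |y| ≤ 2*|x|) :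
    jap x ^ t * |x| ^ p ≤ 8 * (jap y ^ t * |y| ^ p) := by
  have hx : 0 < |x| := by
    by_contra h
    push_neg at h
    have : |x| = 0 := le_antisymm h (abs_nonneg x)
    rw [this] at hyx
    linarith
  have c1 : jap x ^ t ≤ 2 ^ ((3:ℝ)/2) * jap y ^ t :=
    rpow_ratio ht (jap_pos x) (jap_pos y) (jap_le_two_mul hxy) (jap_le_two_mul hyx)
  have c2 : |x| ^ p ≤ 2 ^ ((3:ℝ)/2) * |y| ^ p :=
    rpow_ratio hp hx hy hxy hyx
  have h8 : (2:ℝ) ^ ((3:ℝ)/2) * 2 ^ ((3:ℝ)/2) = 8 := by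
    rw [← Real.rpow_add (by norm_num : (0:ℝ) < 2)]
    rw [show ((3:ℝ)/2 + 3/2) = ((3:ℕ):ℝ) by norm_num, Real.rpow_natCast]
    norm_num
  calc jap x ^ t * |x| ^ p
      ≤ (2 ^ ((3:ℝ)/2) * jap y ^ t) * (2 ^ ((3:ℝ)/2) * |y| ^ p) := by
        apply mul_le_mul c1 c2 (Real.rpow_nonneg (abs_nonneg x) p)
        have := Real.rpow_nonneg (le_of_lt (jap_pos y)) t
        positivity
    _ = (2 ^ ((3:ℝ)/2) * 2 ^ ((3:ℝ)/2)) * (jap y ^ t * |y| ^ p) := by ring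
    _ = 8 * (jap y ^ t * |y| ^ p) := by rw [h8]

/-- For `−3/2 < s < 1/2`, the weight `ω(β) = ⟨β⟩^s |β|^{1/2}` is a Muckenhoupt `A₂` weight:
the product of the averages of `ω` and `ω⁻¹` over any bounded interval is uniformly bounded. -/
theorem stmt5 (s : ℝ) (hs1 : -(3/2) < s) (hs2 : s < 1/2) :
    ∃ C > (0:ℝ), ∀ a b : ℝ, a < b →
      (ENNReal.ofReal (1/(b-a)) *
          ∫⁻ β in Set.Ioc a b, ENNReal.ofReal (jap β ^ s * |β| ^ ((1:ℝ)/2))) *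
      (ENNReal.ofReal (1/(b-a)) *
          ∫⁻ β in Set.Ioc a b, ENNReal.ofReal ((jap β ^ s * |β| ^ ((1:ℝ)/2))⁻¹)) ≤
        ENNReal.ofReal C := by
  obtain ⟨C₁, hC₁, H₁⟩ := gen (t := s) (p := (1:ℝ)/2) (by linarith) (by norm_num)
    (by linarith)
  obtain ⟨C₂, hC₂, H₂⟩ := gen (t := -s) (p := -((1:ℝ)/2)) (by linarith) (by norm_num)
    (by linarith)
  have hinv : ∀ β : ℝ, (jap β ^ s * |β| ^ ((1:ℝ)/2))⁻¹
      = jap β ^ (-s) * |β| ^ (-((1:ℝ)/2)) := by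
    intro β
    rw [mul_inv, Real.rpow_neg (le_of_lt (jap_pos β)), Real.rpow_neg (abs_nonneg β)]
  refine ⟨4*C₁*C₂ + 64, by positivity, fun a b hab => ?_⟩
  simp only [hinv]
  set L : ℝ := b - a with hL_def
  have hL : 0 < L := by simp [hL_def]; linarith
  set M : ℝ := max |a| |b| with hM_def
  have hM : 0 < M := by
    rcases eq_or_ne b 0 with hb | hb
    · have ha : a ≠ 0 := by intro h; rw [h, hb] at hab; exact lt_irrefl 0 hab
      exact lt_max_of_lt_left (abs_pos.mpr ha)
    · exact lt_max_of_lt_right (abs_pos.mpr hb)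
  have hsub : Set.Ioc a b ⊆ Set.Ioc (-M) M :=
    Set.Ioc_subset_Ioc (by
      have := neg_abs_le a
      have := le_max_left |a| |b|
      linarith) (le_trans (le_abs_self b) (le_max_right |a| |b|))
  rcases le_or_gt M (2*L) with hcase | hcase
  · -- near case
    have T1 : (∫⁻ β in Set.Ioc a b, ENNReal.ofReal (jap β ^ s * |β| ^ ((1:ℝ)/2)))
        ≤ ENNReal.ofReal (C₁ * (M ^ ((1:ℝ)/2 + 1) * jap M ^ s)) :=
      le_trans (lintegral_mono_set hsub) (H₁ M hM)
    have T2 : (∫⁻ β in Set.Ioc a b, ENNReal.ofReal (jap β ^ (-s) * |β| ^ (-((1:ℝ)/2))))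
        ≤ ENNReal.ofReal (C₂ * (M ^ (-((1:ℝ)/2) + 1) * jap M ^ (-s))) :=
      le_trans (lintegral_mono_set hsub) (H₂ M hM)
    calc (ENNReal.ofReal (1/L) * ∫⁻ β in Set.Ioc a b, ENNReal.ofReal (jap β ^ s * |β| ^ ((1:ℝ)/2))) *
          (ENNReal.ofReal (1/L) * ∫⁻ β in Set.Ioc a b, ENNReal.ofReal (jap β ^ (-s) * |β| ^ (-((1:ℝ)/2))))
        ≤ (ENNReal.ofReal (1/L) * ENNReal.ofReal (C₁ * (M ^ ((1:ℝ)/2 + 1) * jap M ^ s))) *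
          (ENNReal.ofReal (1/L) * ENNReal.ofReal (C₂ * (M ^ (-((1:ℝ)/2) + 1) * jap M ^ (-s)))) := by
          gcongr
      _ = ENNReal.ofReal ((1/L * (C₁ * (M ^ ((1:ℝ)/2 + 1) * jap M ^ s))) *
            (1/L * (C₂ * (M ^ (-((1:ℝ)/2) + 1) * jap M ^ (-s))))) := by
          have hj1 : (0:ℝ) ≤ jap M ^ s := Real.rpow_nonneg (jap_pos M).le s
          have hj2 : (0:ℝ) ≤ jap M ^ (-s) := Real.rpow_nonneg (jap_pos M).le (-s)
          have hx1 : (0:ℝ) ≤ 1/L * (C₁ * (M ^ ((1:ℝ)/2 + 1) * jap M ^ s)) :=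
            mul_nonneg (by positivity)
              (mul_nonneg hC₁.le (mul_nonneg (Real.rpow_nonneg hM.le _) hj1))
          rw [← ENNReal.ofReal_mul (by positivity), ← ENNReal.ofReal_mul (by positivity),
            ← ENNReal.ofReal_mul hx1]
      _ ≤ ENNReal.ofReal (4*C₁*C₂ + 64) := by
          apply ENNReal.ofReal_le_ofReal
          have e1 : jap M ^ s * jap M ^ (-s) = 1 := by
            rw [← Real.rpow_add (jap_pos M)]
            simp
          have e2 : M ^ ((1:ℝ)/2 + 1) * M ^ (-((1:ℝ)/2) + 1) = M^2 := by
            rw [← Real.rpow_add hM]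
            rw [show ((1:ℝ)/2 + 1 + (-((1:ℝ)/2) + 1)) = ((2:ℕ):ℝ) by norm_num,
              Real.rpow_natCast]
          have e3 : (1/L * (C₁ * (M ^ ((1:ℝ)/2 + 1) * jap M ^ s))) *
              (1/L * (C₂ * (M ^ (-((1:ℝ)/2) + 1) * jap M ^ (-s))))
              = (C₁*C₂) * ((M ^ ((1:ℝ)/2 + 1) * M ^ (-((1:ℝ)/2) + 1)) *
                ((jap M ^ s * jap M ^ (-s)) * (1/L * (1/L)))) := by ring
          rw [e3, e1, e2]
          have h4 : M^2 * (1 * (1/L * (1/L))) ≤ 4 := by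
            have h5 : M*M ≤ 4*(L*L) := by nlinarith
            have h6 : (0:ℝ) ≤ 1/L := by positivity
            calc M^2 * (1*(1/L*(1/L))) = M*M*(1/L)*(1/L) := by ring
              _ ≤ 4*(L*L)*(1/L)*(1/L) :=
                  mul_le_mul_of_nonneg_right (mul_le_mul_of_nonneg_right h5 h6) h6
              _ = 4*(L*(1/L))*(L*(1/L)) := by ring
              _ = 4 := by rw [mul_one_div, div_self (ne_of_gt hL)]; ring
          calc C₁*C₂ * (M^2 * (1 * (1/L * (1/L)))) ≤ C₁*C₂*4 := by
                apply mul_le_mul_of_nonneg_left h4 (by positivity)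
            _ ≤ 4*C₁*C₂ + 64 := by linarith
  · -- far case
    have habs : ∀ x ∈ Set.Ioc a b, |x| ≤ 2*|b| ∧ |b| ≤ 2*|x| := by
      rcases le_or_gt a 0 with ha0 | ha0
      · -- then b < 0, else contradiction
        have hb0 : b < 0 := by
          by_contra hb0
          push_neg at hb0
          have h1 : |a| ≤ L := by rw [abs_of_nonpos ha0]; simp [hL_def]; linarith
          have h2 : |b| ≤ L := by rw [abs_of_nonneg hb0]; simp [hL_def]; linarith
          have : M ≤ L := max_le h1 h2
          linarith
        intro x hx
        have hx0 : x < 0 := lt_of_le_of_lt hx.2 hb0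
        have hMa : M = |a| := max_eq_left (by
          rw [abs_of_nonpos ha0, abs_of_neg hb0]; linarith)
        have h2b : 2*b < a := by
          rw [hMa, abs_of_nonpos ha0] at hcase
          simp [hL_def] at hcase
          linarith
        constructor
        · rw [abs_of_neg hx0, abs_of_neg hb0]
          linarith [hx.1]
        · rw [abs_of_neg hx0, abs_of_neg hb0]
          linarith [hx.2]
      · -- a > 0
        intro x hx
        have hx0 : 0 < x := lt_trans ha0 hx.1
        have hb0 : 0 < b := lt_trans ha0 hab
        have hMb : M = |b| := max_eq_right (by
          rw [abs_of_pos ha0, abs_of_pos hb0]; linarith)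
        have h2a : b < 2*a := by
          rw [hMb, abs_of_pos hb0] at hcase
          simp [hL_def] at hcase
          linarith
        constructor
        · rw [abs_of_pos hx0, abs_of_pos hb0]
          linarith [hx.2]
        · rw [abs_of_pos hx0, abs_of_pos hb0]
          linarith [hx.1]
    have hb0 : 0 < |b| := by
      rcases eq_or_ne b 0 with hb | hb
      · exfalso
        have ha0 : a < 0 := by rw [hb] at hab; exact hab
        have hMa : M = |a| := by
          rw [hM_def, hb, abs_zero]
          exact max_eq_left (abs_nonneg a)
        have hLa : L = |a| := by rw [hL_def, hb, abs_of_neg ha0]; ring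
        rw [hMa, ← hLa] at hcase
        linarith
      · exact abs_pos.mpr hb
    have hs_abs : |s| ≤ 3/2 := abs_le.mpr ⟨by linarith, by linarith⟩
    have hns_abs : |(-s)| ≤ 3/2 := by rw [abs_neg]; exact hs_abs
    have T1 : (∫⁻ β in Set.Ioc a b, ENNReal.ofReal (jap β ^ s * |β| ^ ((1:ℝ)/2)))
        ≤ ENNReal.ofReal (8 * (jap b ^ s * |b| ^ ((1:ℝ)/2))) * ENNReal.ofReal L := by
      calc (∫⁻ β in Set.Ioc a b, ENNReal.ofReal (jap β ^ s * |β| ^ ((1:ℝ)/2)))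
          ≤ ∫⁻ _ in Set.Ioc a b, ENNReal.ofReal (8 * (jap b ^ s * |b| ^ ((1:ℝ)/2))) := by
            apply setLIntegral_mono (by fun_prop)
            intro x hx
            exact ENNReal.ofReal_le_ofReal
              (far_ratio hs_abs (abs_le.mpr ⟨by norm_num, by norm_num⟩) hb0 (habs x hx).1 (habs x hx).2)
        _ = ENNReal.ofReal (8 * (jap b ^ s * |b| ^ ((1:ℝ)/2))) * ENNReal.ofReal L := by
            rw [setLIntegral_const, Real.volume_Ioc]
    have T2 : (∫⁻ β in Set.Ioc a b, ENNReal.ofReal (jap β ^ (-s) * |β| ^ (-((1:ℝ)/2))))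
        ≤ ENNReal.ofReal (8 * (jap b ^ (-s) * |b| ^ (-((1:ℝ)/2)))) * ENNReal.ofReal L := by
      calc (∫⁻ β in Set.Ioc a b, ENNReal.ofReal (jap β ^ (-s) * |β| ^ (-((1:ℝ)/2))))
          ≤ ∫⁻ _ in Set.Ioc a b, ENNReal.ofReal (8 * (jap b ^ (-s) * |b| ^ (-((1:ℝ)/2)))) := by
            apply setLIntegral_mono (by fun_prop)
            intro x hx
            exact ENNReal.ofReal_le_ofReal
              (far_ratio hns_abs (abs_le.mpr ⟨by norm_num, by norm_num⟩) hb0 (habs x hx).1 (habs x hx).2)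
        _ = ENNReal.ofReal (8 * (jap b ^ (-s) * |b| ^ (-((1:ℝ)/2)))) * ENNReal.ofReal L := by
            rw [setLIntegral_const, Real.volume_Ioc]
    calc (ENNReal.ofReal (1/L) * ∫⁻ β in Set.Ioc a b, ENNReal.ofReal (jap β ^ s * |β| ^ ((1:ℝ)/2))) *
          (ENNReal.ofReal (1/L) * ∫⁻ β in Set.Ioc a b, ENNReal.ofReal (jap β ^ (-s) * |β| ^ (-((1:ℝ)/2))))
        ≤ (ENNReal.ofReal (1/L) * (ENNReal.ofReal (8 * (jap b ^ s * |b| ^ ((1:ℝ)/2))) * ENNReal.ofReal L)) *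
          (ENNReal.ofReal (1/L) * (ENNReal.ofReal (8 * (jap b ^ (-s) * |b| ^ (-((1:ℝ)/2)))) * ENNReal.ofReal L)) := by
          gcongr
      _ = ENNReal.ofReal ((1/L * (8 * (jap b ^ s * |b| ^ ((1:ℝ)/2)) * L)) *
            (1/L * (8 * (jap b ^ (-s) * |b| ^ (-((1:ℝ)/2))) * L))) := by
          have hX : (0:ℝ) ≤ 8 * (jap b ^ s * |b| ^ ((1:ℝ)/2)) := by
            have := Real.rpow_nonneg (jap_pos b).le s
            have := Real.rpow_nonneg (abs_nonneg b) ((1:ℝ)/2)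
            nlinarith
          have hY : (0:ℝ) ≤ 8 * (jap b ^ (-s) * |b| ^ (-((1:ℝ)/2))) := by
            have := Real.rpow_nonneg (jap_pos b).le (-s)
            have := Real.rpow_nonneg (abs_nonneg b) (-((1:ℝ)/2))
            nlinarith
          rw [← ENNReal.ofReal_mul hX, ← ENNReal.ofReal_mul (by positivity : (0:ℝ) ≤ 1/L),
            ← ENNReal.ofReal_mul hY, ← ENNReal.ofReal_mul (by positivity : (0:ℝ) ≤ 1/L),
            ← ENNReal.ofReal_mul (mul_nonneg (by positivity : (0:ℝ) ≤ 1/L) (mul_nonneg hX hL.le))]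
      _ ≤ ENNReal.ofReal (4*C₁*C₂ + 64) := by
          apply ENNReal.ofReal_le_ofReal
          have e1 : jap b ^ s * jap b ^ (-s) = 1 := by
            rw [← Real.rpow_add (jap_pos b)]; simp
          have e2 : |b| ^ ((1:ℝ)/2) * |b| ^ (-((1:ℝ)/2)) = 1 := by
            rw [← Real.rpow_add hb0]; simp
          have e3 : (1/L * (8 * (jap b ^ s * |b| ^ ((1:ℝ)/2)) * L)) *
              (1/L * (8 * (jap b ^ (-s) * |b| ^ (-((1:ℝ)/2))) * L))
              = 64 * ((jap b ^ s * jap b ^ (-s)) * (|b| ^ ((1:ℝ)/2) * |b| ^ (-((1:ℝ)/2)))) *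
                (L * (1/L)) * (L * (1/L)) := by ring
          have e4 : L * (1/L) = 1 := by field_simp
          rw [e3, e1, e2, e4]
          have : (0:ℝ) ≤ C₁*C₂ := by positivity
          nlinarith
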